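/- Let G be a finite group containing an involution t with C_G(t) = ⟨t⟩ (a self-centralizing involution). Then κ(G) = 1/4 + 1/|G| - 1/|G|^2. -/

import Mathlib

open Subgroup MulAction

noncomputable def kappa (G : Type*) [Group G] : ℝ :=
  (Nat.card {p : G × G // IsConj p.1 p.2} : ℝ) / (Nat.card G : ℝ) ^ 2

section Aux

variable {G : Type*} [Group G]

lemma mem_zpowers_two {t : G} (ht : orderOf t = 2) {z : G} (hz : z ∈ zpowers t) :
    z = 1 ∨ z = t := by
  obtain ⟨k, rfl⟩ := hz
  have h2 : (t : G) ^ (2:ℤ) = 1 := by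
    have := ht ▸ pow_orderOf_eq_one t; exact_mod_cast this
  show t ^ k = 1 ∨ t ^ k = t
  rcases Int.even_or_odd k with ⟨q, rfl⟩ | ⟨q, rfl⟩
  · left; rw [← two_mul, zpow_mul, h2, one_zpow]
  · right; rw [zpow_add, zpow_mul, h2, one_zpow, one_mul, zpow_one]

lemma class_card_mul [Fintype G] (g : G) :
    Nat.card {h // IsConj g h} * Nat.card (Subgroup.centralizer ({g} : Set G)) = Nat.card G := by
  classical
  have e1 : {h // IsConj g h} ≃ MulAction.orbit (ConjAct G) g :=
    Equiv.subtypeEquivRight (fun h => isConj_comm.trans (ConjAct.mem_orbit_conjAct).symm)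
  have e2 : Subgroup.centralizer ({g} : Set G) ≃ MulAction.stabilizer (ConjAct G) g :=
    Equiv.subtypeEquiv (ConjAct.toConjAct (G := G)).toEquiv (fun k => by
      rw [Subgroup.centralizer_eq_comap_stabilizer]; exact Iff.rfl)
  rw [Nat.card_congr e1, Nat.card_congr e2, Nat.card_eq_fintype_card, Nat.card_eq_fintype_card,
    Nat.card_eq_fintype_card]
  rw [MulAction.card_orbit_mul_card_stabilizer_eq_card_group (ConjAct G) g]
  exact Fintype.card_congr (ConjAct.ofConjAct (G := G)).toEquiv

end Aux

theorem kappa_of_self_centralizing_involution (G : Type*) [Group G] [Fintype G]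
    (t : G) (ht : orderOf t = 2)
    (hc : Subgroup.centralizer {t} = Subgroup.zpowers t) :
    kappa G = 1 / 4 + 1 / (Nat.card G : ℝ) - 1 / (Nat.card G : ℝ) ^ 2 := by
  classical
  have ht1 : t ≠ 1 := by
    intro h; rw [h, orderOf_one] at ht; norm_num at ht
  have htt : t * t = 1 := by
    have := ht ▸ pow_orderOf_eq_one t; rwa [pow_two] at this
  have htinv : t⁻¹ = t := by
    rw [inv_eq_iff_mul_eq_one]; exact htt
  -- ⟨t⟩ is a Sylow 2-subgroup
  haveI : Fact (Nat.Prime 2) := ⟨Nat.prime_two⟩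
  have hZ2 : IsPGroup 2 (zpowers t) :=
    IsPGroup.of_card (by rw [Nat.card_zpowers, ht, pow_one])
  obtain ⟨P, hle⟩ := hZ2.exists_le_sylow
  have htP : t ∈ (P : Subgroup G) := hle (mem_zpowers t)
  have hPz : (P : Subgroup G) = zpowers t := by
    haveI : Nontrivial (↥(P : Subgroup G)) :=
      ⟨⟨⟨t, htP⟩, 1, by simp [ht1]⟩⟩
    haveI := P.2.center_nontrivial
    obtain ⟨z, hz1⟩ := exists_ne (1 : Subgroup.center ↥(P : Subgroup G))
    have hzg : ((z : ↥(P : Subgroup G)) : G) ∈ Subgroup.centralizer {t} := by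
      rw [mem_centralizer_iff]
      intro x hx
      rw [Set.mem_singleton_iff] at hx; subst hx
      exact congrArg Subtype.val ((Subgroup.mem_center_iff.mp z.2) ⟨x, htP⟩)
    rw [hc] at hzg
    have hzgt : ((z : ↥(P : Subgroup G)) : G) = t := by
      rcases mem_zpowers_two ht hzg with h | h
      · exact absurd (Subtype.ext (Subtype.ext h)) hz1
      · exact h
    refine le_antisymm ?_ hle
    intro p hp
    rw [← hc, mem_centralizer_iff]
    intro x hx
    rw [Set.mem_singleton_iff] at hx; subst hx
    have := congrArg Subtype.val ((Subgroup.mem_center_iff.mp z.2) ⟨p, hp⟩)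
    simp only [Subgroup.coe_mul] at this
    rw [hzgt] at this
    exact this.symm
  -- Burnside hypothesis
  have hPb : Subgroup.normalizer ((P : Subgroup G) : Set G) ≤ Subgroup.centralizer ((P : Subgroup G) : Set G) := by
    intro g hg
    rw [Subgroup.mem_normalizer_iff] at hg
    have hgt : g * t * g⁻¹ ∈ (P : Subgroup G) := (hg t).mp htP
    rw [hPz] at hgt
    have hgt' : g * t * g⁻¹ = t := by
      rcases mem_zpowers_two ht hgt with h | h
      · exfalso
        apply ht1
        have : t = g⁻¹ * 1 * g := by rw [← h]; group
        simpa using this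
      · exact h
    rw [mem_centralizer_iff]
    intro x hx
    rw [hPz] at hx
    rcases mem_zpowers_two ht hx with rfl | rfl
    · simp
    · conv_lhs => rw [← hgt']
      group
  set N := (MonoidHom.transferSylow P hPb).ker with hNdef
  have hNnorm : N.Normal := MonoidHom.normal_ker _
  have hcompl : IsComplement' N (P : Subgroup G) :=
    MonoidHom.ker_transferSylow_isComplement' P hPb
  set m := Nat.card ↥N with hmdef
  have hm2 : m * 2 = Nat.card G := by
    have := hcompl.card_mul
    rwa [hPz, Nat.card_zpowers, ht] at this
  have htN : t ∉ N := by
    intro htn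
    have : t ∈ N ⊓ (P : Subgroup G) := ⟨htn, htP⟩
    rw [hcompl.disjoint.eq_bot] at this
    exact ht1 (Subgroup.mem_bot.mp this)
  -- conjugation by t on N
  have hconjN : ∀ n : G, n ∈ N → t * n * t⁻¹ ∈ N := fun n hn => hNnorm.conj_mem n hn t
  set φ : ↥N →* ↥N := MonoidHom.mk' (fun n => ⟨t * n * t⁻¹, hconjN n n.2⟩)
    (fun a b => by ext; push_cast; group) with hφdef
  have hφfpf : MonoidHom.FixedPointFree ⇑φ := by
    intro n hn
    have h1 : t * (n : G) * t⁻¹ = n := congrArg Subtype.val hn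
    have hcn : (n : G) ∈ Subgroup.centralizer {t} := by
      rw [mem_centralizer_iff]
      intro x hx
      rw [Set.mem_singleton_iff] at hx; subst hx
      conv_rhs => rw [← h1]
      group
    rw [hc] at hcn
    rcases mem_zpowers_two ht hcn with h | h
    · exact Subtype.ext h
    · exact absurd (h ▸ n.2) htN
  have hφinv : Function.Involutive ⇑φ := by
    intro n
    ext
    show t * (t * (n : G) * t⁻¹) * t⁻¹ = n
    rw [htinv]
    calc t * (t * (n : G) * t) * t = (t * t) * n * (t * t) := by group
    _ = n := by rw [htt]; group
  have hN_comm : ∀ a b : ↥N, a * b = b * a := fun a b =>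
    (hφfpf.commute_all_of_involutive hφinv a b).eq
  have hN_inv : ∀ n : ↥N, t * (n : G) * t⁻¹ = (n : G)⁻¹ := by
    intro n
    have := congrFun (hφfpf.coe_eq_inv_of_involutive hφinv) n
    exact congrArg Subtype.val this
  have hN_odd : ∀ n : ↥N, Odd (orderOf (n : G)) := fun n => by
    rw [Subgroup.orderOf_coe]; exact hφfpf.odd_orderOf_of_involutive hφinv n
  -- class sizes
  have hm_pos : 0 < m := Nat.card_pos
  have hcentt : Nat.card (Subgroup.centralizer ({t} : Set G)) = 2 := by
    rw [hc, Nat.card_zpowers, ht]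
  have hcls_t : Nat.card {h // IsConj t h} = m := by
    have := class_card_mul t
    rw [hcentt, ← hm2] at this
    exact Nat.eq_of_mul_eq_mul_right (by norm_num) this
  have hconjt_not_mem : ∀ h : G, IsConj t h → h ∉ N := by
    intro h hconj hmem
    obtain ⟨c, rfl⟩ := isConj_iff.mp hconj
    apply htN
    have := hNnorm.conj_mem _ hmem c⁻¹
    simpa [mul_assoc] using this
  have hNFcard : (Finset.univ.filter (· ∈ N)).card = m := by
    rw [← Fintype.card_subtype, hmdef, Nat.card_eq_fintype_card]
  have hGcard : Fintype.card G = m * 2 := by rw [← Nat.card_eq_fintype_card, ← hm2]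
  have hKcard : (Finset.univ.filter (· ∉ N)).card = m := by
    have := Finset.card_filter_add_card_filter_not (s := (Finset.univ : Finset G))
      (p := (· ∈ N))
    rw [hNFcard, Finset.card_univ, hGcard] at this
    omega
  have hCcard : (Finset.univ.filter (fun h => IsConj t h)).card = m := by
    rw [← Fintype.card_subtype, ← Nat.card_eq_fintype_card, hcls_t]
  have hconj_of_not_mem : ∀ g : G, g ∉ N → IsConj t g := by
    intro g hg
    have hsub : (Finset.univ.filter (fun h => IsConj t h)) ⊆ (Finset.univ.filter (· ∉ N)) := by
      intro x hx
      rw [Finset.mem_filter] at hx ⊢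
      exact ⟨hx.1, hconjt_not_mem x hx.2⟩
    have heq := Finset.eq_of_subset_of_card_le hsub (by rw [hCcard, hKcard])
    have : g ∈ (Finset.univ.filter (· ∉ N)) := Finset.mem_filter.mpr ⟨Finset.mem_univ g, hg⟩
    rw [← heq, Finset.mem_filter] at this
    exact this.2
  have hcls_not_mem : ∀ g : G, g ∉ N → Nat.card {h // IsConj g h} = m := by
    intro g hg
    have hcj := hconj_of_not_mem g hg
    have e : {h // IsConj g h} ≃ {h // IsConj t h} :=
      Equiv.subtypeEquivRight (fun h => ⟨fun hh => hcj.trans hh, fun hh => hcj.symm.trans hh⟩)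
    rw [Nat.card_congr e, hcls_t]
  have hcls_one : Nat.card {h : G // IsConj 1 h} = 1 := by
    have : Unique {h : G // IsConj 1 h} :=
      ⟨⟨⟨1, IsConj.refl 1⟩⟩, fun x => Subtype.ext (by
        have := x.2
        rw [isConj_one_right] at this
        exact this)⟩
    exact Nat.card_unique
  have hcls_two : ∀ g : G, g ∈ N → g ≠ 1 → Nat.card {h // IsConj g h} = 2 := by
    intro g hg hg1
    have hgodd : Odd (orderOf g) := hN_odd ⟨g, hg⟩
    have hginv_ne : g ≠ g⁻¹ := by
      intro h
      have hg2 : g ^ 2 = 1 := by rw [pow_two]; nth_rewrite 2 [h]; simp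
      have hdvd := orderOf_dvd_of_pow_eq_one hg2
      rcases (Nat.dvd_prime Nat.prime_two).mp hdvd with h1 | h2
      · exact hg1 (orderOf_eq_one_iff.mp h1)
      · rw [h2] at hgodd
        obtain ⟨j, hj⟩ := hgodd
        omega
    have hconjinv : IsConj g g⁻¹ := isConj_iff.mpr ⟨t, hN_inv ⟨g, hg⟩⟩
    have hNle : N ≤ Subgroup.centralizer ({g} : Set G) := by
      intro n hn
      rw [mem_centralizer_iff]
      intro x hx
      rw [Set.mem_singleton_iff] at hx; subst hx
      have := hN_comm ⟨x, hg⟩ ⟨n, hn⟩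
      exact congrArg Subtype.val this
    have hcent_ge : m ≤ Nat.card (Subgroup.centralizer ({g} : Set G)) :=
      Subgroup.card_le_of_le hNle
    haveI : Nontrivial {h // IsConj g h} :=
      ⟨⟨⟨g, IsConj.refl g⟩, ⟨g⁻¹, hconjinv⟩, fun hcontra =>
        hginv_ne (congrArg Subtype.val hcontra)⟩⟩
    have hge2 : 2 ≤ Nat.card {h // IsConj g h} := by
      rw [Nat.card_eq_fintype_card]
      exact Fintype.one_lt_card
    have hup : Nat.card {h // IsConj g h} * m ≤ 2 * m := by
      calc Nat.card {h // IsConj g h} * m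
          ≤ Nat.card {h // IsConj g h} * Nat.card (Subgroup.centralizer ({g} : Set G)) :=
            Nat.mul_le_mul_left _ hcent_ge
        _ = Nat.card G := class_card_mul g
        _ = m * 2 := hm2.symm
        _ = 2 * m := mul_comm _ _
    have := Nat.le_of_mul_le_mul_right hup hm_pos
    omega
  -- total count
  obtain ⟨k, hk⟩ : ∃ k, m = k + 1 := ⟨m - 1, by omega⟩
  have hsum : Nat.card {p : G × G // IsConj p.1 p.2} = (1 + 2 * k) + m * m := by
    have e : {p : G × G // IsConj p.1 p.2} ≃ (Σ g : G, {h // IsConj g h}) :=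
      ⟨fun p => ⟨p.1.1, p.1.2, p.2⟩, fun x => ⟨(x.1, x.2.1), x.2.2⟩,
        fun p => rfl, fun x => rfl⟩
    rw [Nat.card_congr e, Nat.card_eq_fintype_card, Fintype.card_sigma]
    have hval : ∀ g : G, Fintype.card {h // IsConj g h} =
        if g ∈ N then (if g = 1 then 1 else 2) else m := by
      intro g
      rw [← Nat.card_eq_fintype_card]
      by_cases hg : g ∈ N
      · by_cases hg1 : g = 1
        · subst hg1; rw [if_pos hg, if_pos rfl, hcls_one]
        · rw [if_pos hg, if_neg hg1, hcls_two g hg hg1]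
      · rw [if_neg hg, hcls_not_mem g hg]
    rw [Finset.sum_congr rfl (fun g _ => hval g)]
    rw [← Finset.sum_filter_add_sum_filter_not Finset.univ (· ∈ N)]
    have h1mem : (1:G) ∈ Finset.univ.filter (· ∈ N) :=
      Finset.mem_filter.mpr ⟨Finset.mem_univ _, N.one_mem⟩
    have h1s : ∑ g ∈ Finset.univ.filter (· ∈ N),
        (if g ∈ N then (if g = 1 then 1 else 2) else m) = 1 + 2 * k := by
      rw [Finset.sum_congr rfl (fun g hg => if_pos (Finset.mem_filter.mp hg).2)]
      rw [← Finset.add_sum_erase _ _ h1mem, if_pos rfl]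
      congr 1
      rw [Finset.sum_congr rfl (fun g hg => if_neg (Finset.ne_of_mem_erase hg))]
      rw [Finset.sum_const, Finset.card_erase_of_mem h1mem, hNFcard, smul_eq_mul]
      omega
    have h2s : ∑ g ∈ Finset.univ.filter (fun g => ¬ (g ∈ N)),
        (if g ∈ N then (if g = 1 then 1 else 2) else m) = m * m := by
      rw [Finset.sum_congr rfl (fun g hg => if_neg (Finset.mem_filter.mp hg).2)]
      rw [Finset.sum_const, hKcard, smul_eq_mul]
    rw [h1s, h2s]
  -- final real computation
  have hcG : (Nat.card G : ℝ) = 2 * ((k : ℝ) + 1) := by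
    rw [← hm2, hk]; push_cast; ring
  have hx : ((k : ℝ) + 1) ≠ 0 := by positivity
  rw [kappa, hsum, hcG, hk]
  push_cast
  field_simp
  ring
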